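/- Let q ≥ 3, 1 ≤ ℓ < q, L ≥ 2 and m ≥ 1 be integers, let M = qm and n = (qm)!/(m!)^q, and let C ⊆ [q]^n be the simplex code whose M codewords are the rows of the M×n matrix whose columns are exactly all distinct vectors in [q]^M containing each symbol of [q] exactly m times. Then for every L-tuple (c_1,...,c_L) of pairwise distinct codewords of C, the average ℓ-radius satisfies radbar_ℓ(c_1,...,c_L) = 1 − ∑_{a∈A_{q,L}} (maxℓ{a}/L) · multinom(L; a_1,...,a_q) · multinom(qm−L; m−a_1,...,m−a_q) / multinom(qm; m,...,m), where A_{q,L} = {(a_1,...,a_q) ∈ ℤ_{≥0}^q : a_1+⋯+a_q = L}, maxℓ{a} = max_{A ⊆ [q], |A|=ℓ} ∑_{i∈A} a_i, multinom denotes the multinomial coefficient (taken to be 0 if any lower entry is negative). Consequently, since the ℓ-radius of any L distinct codewords is at least their average ℓ-radius, C is (p,ℓ,L)-list-recoverable for every p strictly less than this common value. -/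

import Mathlib

open Finset
open scoped Classical

/-- `plurL ℓ (x₁,…,x_L)`: number of occurrences of the `ℓ` most popular symbols. -/
def plurL (ℓ : ℕ) {q L : ℕ} (x : Fin L → Fin q) : ℕ :=
  (Finset.powersetCard ℓ (Finset.univ : Finset (Fin q))).sup
    fun A => (Finset.univ.filter fun i => x i ∈ A).card

/-- `maxl q ℓ a`: the sum of the `ℓ` largest entries of `a`, i.e.
`max_{A ⊆ [q], |A|=ℓ} ∑_{i∈A} a i`. -/
def maxl (q ℓ : ℕ) (a : Fin q → ℕ) : ℕ :=
  (Finset.powersetCard ℓ (Finset.univ : Finset (Fin q))).sup fun A => ∑ i ∈ A, a i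

/-- The list-recovery distance between `x ∈ [q]^n` and a tuple of `ℓ`-subsets. -/
def dLR {q ℓ n : ℕ} (x : Fin n → Fin q) (Y : Fin n → {A : Finset (Fin q) // A.card = ℓ}) : ℕ :=
  (Finset.univ.filter fun j => x j ∉ (Y j).1).card

lemma aux_card_filter_coe {α : Type} [DecidableEq α] (s : Finset α) (p : α → Prop) [DecidablePred p] :
    ((Finset.univ : Finset {x // x ∈ s}).filter fun x => p x.1).card = (s.filter p).card := by
  rw [Finset.univ_eq_attach]
  refine Finset.card_bij (fun x _ => x.1) ?_ ?_ ?_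
  · rintro ⟨x, hx⟩ h
    rw [Finset.mem_filter] at h ⊢
    exact ⟨hx, h.2⟩
  · rintro ⟨x, hx⟩ _ ⟨y, hy⟩ _ h
    exact Subtype.ext h
  · intro b hb
    rw [Finset.mem_filter] at hb
    exact ⟨⟨b, hb.1⟩, Finset.mem_filter.2 ⟨Finset.mem_attach _ _, hb.2⟩, rfl⟩

lemma aux_card_split {α : Type} [DecidableEq α] [Fintype α] (T : Finset α) (p : α → Prop) [DecidablePred p] :
    ((Finset.univ : Finset α).filter p).card = (T.filter p).card + (Tᶜ.filter p).card := by
  rw [← Finset.card_union_of_disjoint (Finset.disjoint_filter_filter disjoint_compl_right),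
    ← Finset.filter_union, Finset.union_compl]

lemma aux_countA (q : ℕ) (s : Finset (Fin q)) :
    ∀ (α : Type) [DecidableEq α] [Fintype α] (b : Fin q → ℕ), (∑ i ∈ s, b i) = Fintype.card α →
    ((Finset.univ : Finset (α → Fin q)).filter
        (fun f => ∀ i : Fin q,
          (Finset.univ.filter fun x => f x = i).card = if i ∈ s then b i else 0)).card
      = Nat.multinomial s b := by
  induction s using Finset.cons_induction with
  | empty =>
      intro α _ _ b hb
      simp only [Finset.sum_empty] at hb
      have hE : IsEmpty α := Fintype.card_eq_zero_iff.mp hb.symm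
      have h1 : ∀ f : α → Fin q, ∀ i : Fin q,
          (Finset.univ.filter fun x => f x = i).card
            = if i ∈ (∅ : Finset (Fin q)) then b i else 0 := by
        intro f i
        simp [Finset.univ_eq_empty]
      rw [Finset.filter_true_of_mem (fun f _ => h1 f), Finset.card_univ, Nat.multinomial_empty,
        Fintype.card_fun, ← hb, pow_zero]
  | cons i₀ s hi₀ ih =>
      intro α _ _ b hb
      rw [Finset.sum_cons] at hb
      have hmaps : ∀ f ∈ (Finset.univ : Finset (α → Fin q)).filter
          (fun f => ∀ i : Fin q, (Finset.univ.filter fun x => f x = i).card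
            = if i ∈ Finset.cons i₀ s hi₀ then b i else 0),
          (Finset.univ.filter fun x => f x = i₀) ∈ Finset.powersetCard (b i₀) Finset.univ := by
        intro f hf
        rw [Finset.mem_filter] at hf
        rw [Finset.mem_powersetCard]
        refine ⟨Finset.subset_univ _, ?_⟩
        have := hf.2 i₀
        rwa [if_pos (Finset.mem_cons_self _ _)] at this
      rw [Finset.card_eq_sum_card_fiberwise hmaps]
      have hstep : ∀ S ∈ Finset.powersetCard (b i₀) (Finset.univ : Finset α),
          (((Finset.univ : Finset (α → Fin q)).filter
            (fun f => ∀ i : Fin q, (Finset.univ.filter fun x => f x = i).card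
              = if i ∈ Finset.cons i₀ s hi₀ then b i else 0)).filter
              fun f => (Finset.univ.filter fun x => f x = i₀) = S).card
            = Nat.multinomial s b := by
        intro S hS
        rw [Finset.mem_powersetCard] at hS
        have hcard : (∑ i ∈ s, b i) = Fintype.card {x // x ∈ (Sᶜ : Finset α)} := by
          rw [Fintype.card_coe, Finset.card_compl, hS.2]
          omega
        refine Eq.trans (Finset.card_bij' (fun f _ => fun x => f x.1)
          (fun g _ => fun x => if h : x ∈ S then i₀ else g ⟨x, Finset.mem_compl.2 h⟩)
          ?_ ?_ ?_ ?_) (ih {x // x ∈ (Sᶜ : Finset α)} b hcard)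
        · intro f hf
          rw [Finset.mem_filter, Finset.mem_filter] at hf
          obtain ⟨⟨-, hfA⟩, hfS⟩ := hf
          rw [Finset.mem_filter]
          refine ⟨Finset.mem_univ _, ?_⟩
          intro i
          dsimp only
          rw [aux_card_filter_coe (Sᶜ) (fun x => f x = i)]
          by_cases hii : i = i₀
          · subst hii
            have hz : Sᶜ.filter (fun x => f x = i) = ∅ := by
              rw [Finset.filter_eq_empty_iff]
              intro x hx hfx
              rw [Finset.mem_compl] at hx
              exact hx (by rw [← hfS]; exact Finset.mem_filter.2 ⟨Finset.mem_univ _, hfx⟩)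
            rw [hz, Finset.card_empty, if_neg hi₀]
          · have h1 := hfA i
            simp only [Finset.mem_cons, hii, false_or] at h1
            have h2 := aux_card_split S (fun x => f x = i)
            have hzero : (S.filter fun x => f x = i).card = 0 := by
              rw [Finset.card_eq_zero, Finset.filter_eq_empty_iff]
              intro x hx hfx
              have hxi : f x = i₀ := by
                have : x ∈ Finset.univ.filter fun y => f y = i₀ := by rw [hfS]; exact hx
                exact (Finset.mem_filter.1 this).2
              exact hii (hfx ▸ hxi ▸ rfl)
            rw [← h1, h2, hzero, zero_add]
        · intro g hg
          rw [Finset.mem_filter] at hg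
          have hgi₀ : ∀ x : {x // x ∈ (Sᶜ : Finset α)}, ¬ g x = i₀ := by
            intro x hx
            have h0 := hg.2 i₀
            rw [if_neg hi₀, Finset.card_eq_zero, Finset.filter_eq_empty_iff] at h0
            exact h0 (Finset.mem_univ x) hx
          have hfib : (Finset.univ.filter fun x : α =>
              (if h : x ∈ S then i₀ else g ⟨x, Finset.mem_compl.2 h⟩) = i₀) = S := by
            ext x
            rw [Finset.mem_filter]
            constructor
            · rintro ⟨-, hx⟩
              by_contra hxS
              rw [dif_neg hxS] at hx
              exact hgi₀ _ hx
            · intro hx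
              exact ⟨Finset.mem_univ _, by rw [dif_pos hx]⟩
          rw [Finset.mem_filter, Finset.mem_filter]
          refine ⟨⟨Finset.mem_univ _, ?_⟩, hfib⟩
          intro i
          by_cases hii : i = i₀
          · subst hii
            rw [hfib, if_pos (Finset.mem_cons_self _ _), hS.2]
          · have h2 := aux_card_split S
              (fun x => (if h : x ∈ S then i₀ else g ⟨x, Finset.mem_compl.2 h⟩) = i)
            have hzS : (S.filter fun x =>
                (if h : x ∈ S then i₀ else g ⟨x, Finset.mem_compl.2 h⟩) = i).card = 0 := by
              rw [Finset.card_eq_zero, Finset.filter_eq_empty_iff]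
              intro x hx hfx
              rw [dif_pos hx] at hfx
              exact hii hfx.symm
            have hcc := aux_card_filter_coe (Sᶜ)
              (fun x => (if h : x ∈ S then i₀ else g ⟨x, Finset.mem_compl.2 h⟩) = i)
            have hset : ((Finset.univ : Finset {x // x ∈ (Sᶜ : Finset α)}).filter
                  fun x => (if h : x.1 ∈ S then i₀ else g ⟨x.1, Finset.mem_compl.2 h⟩) = i)
                = (Finset.univ.filter fun x => g x = i) := by
              apply Finset.filter_congr
              intro x _
              rw [dif_neg (Finset.mem_compl.1 x.2)]
            rw [hset] at hcc
            have h1 := hg.2 i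
            simp only [Finset.mem_cons, hii, false_or]
            rw [h2, hzS, zero_add, ← hcc, h1]
        · intro f hf
          rw [Finset.mem_filter] at hf
          funext x
          dsimp only
          by_cases hx : x ∈ S
          · rw [dif_pos hx]
            have : x ∈ Finset.univ.filter fun y => f y = i₀ := by rw [hf.2]; exact hx
            exact ((Finset.mem_filter.1 this).2).symm
          · rw [dif_neg hx]
        · intro g _
          funext x
          dsimp only
          rw [dif_neg (Finset.mem_compl.1 x.2)]
      rw [Finset.sum_congr rfl hstep, Finset.sum_const, smul_eq_mul,
        Finset.card_powersetCard, Finset.card_univ, ← hb, Nat.multinomial_cons]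

lemma aux_countA_univ (q : ℕ) (α : Type) [DecidableEq α] [Fintype α] (b : Fin q → ℕ)
    (hb : (∑ i, b i) = Fintype.card α) :
    ((Finset.univ : Finset (α → Fin q)).filter
        (fun f => ∀ i : Fin q, (Finset.univ.filter fun x => f x = i).card = b i)).card
      = Nat.multinomial Finset.univ b := by
  rw [← aux_countA q Finset.univ α b hb]
  congr 1
  apply Finset.filter_congr
  intro f _
  simp

lemma aux_card_prod (q : ℕ) (α : Type) [DecidableEq α] [Fintype α] (T : Finset α)
    (P : ({x // x ∈ T} → Fin q) → Prop) [DecidablePred P]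
    (Q : ({x // x ∈ (Tᶜ : Finset α)} → Fin q) → Prop) [DecidablePred Q] :
    ((Finset.univ : Finset (α → Fin q)).filter
        (fun v => P (fun x => v x.1) ∧ Q (fun x => v x.1))).card
      = ((Finset.univ : Finset ({x // x ∈ T} → Fin q)).filter P).card *
        ((Finset.univ : Finset ({x // x ∈ (Tᶜ : Finset α)} → Fin q)).filter Q).card := by
  rw [← Finset.card_product]
  refine Finset.card_bij' (fun v _ => (fun x => v x.1, fun x => v x.1))
    (fun p _ => fun x => if h : x ∈ T then p.1 ⟨x, h⟩ else p.2 ⟨x, Finset.mem_compl.2 h⟩)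
    ?_ ?_ ?_ ?_
  · intro v hv
    rw [Finset.mem_filter] at hv
    rw [Finset.mem_product, Finset.mem_filter, Finset.mem_filter]
    exact ⟨⟨Finset.mem_univ _, hv.2.1⟩, Finset.mem_univ _, hv.2.2⟩
  · intro p hp
    rw [Finset.mem_product, Finset.mem_filter, Finset.mem_filter] at hp
    rw [Finset.mem_filter]
    refine ⟨Finset.mem_univ _, ?_, ?_⟩
    · have h1 : (fun x : {x // x ∈ T} =>
          (if h : x.1 ∈ T then p.1 ⟨x.1, h⟩ else p.2 ⟨x.1, Finset.mem_compl.2 h⟩)) = p.1 := by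
        funext x; rw [dif_pos x.2]
      dsimp only
      rw [h1]
      exact hp.1.2
    · have h1 : (fun x : {x // x ∈ (Tᶜ : Finset α)} =>
          (if h : x.1 ∈ T then p.1 ⟨x.1, h⟩ else p.2 ⟨x.1, Finset.mem_compl.2 h⟩)) = p.2 := by
        funext x; rw [dif_neg (Finset.mem_compl.1 x.2)]
      dsimp only
      rw [h1]
      exact hp.2.2
  · intro v _
    funext x
    dsimp only
    by_cases hx : x ∈ T
    · rw [dif_pos hx]
    · rw [dif_neg hx]
  · intro p _
    dsimp only
    refine Prod.ext ?_ ?_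
    · funext x; dsimp only; rw [dif_pos x.2]
    · funext x; dsimp only; rw [dif_neg (Finset.mem_compl.1 x.2)]

lemma aux_card_mem_eq_sum {L q : ℕ} (x : Fin L → Fin q) (A : Finset (Fin q)) :
    (Finset.univ.filter fun i => x i ∈ A).card
      = ∑ s ∈ A, (Finset.univ.filter fun i => x i = s).card := by
  rw [Finset.card_eq_sum_card_fiberwise
    (s := Finset.univ.filter fun i => x i ∈ A) (f := x) (t := A) (fun i hi => (Finset.mem_filter.1 hi).2)]
  refine Finset.sum_congr rfl fun s hs => ?_
  congr 1
  ext i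
  simp only [Finset.mem_filter, Finset.mem_univ, true_and]
  constructor
  · rintro ⟨-, h⟩; exact h
  · intro h; exact ⟨h ▸ hs, h⟩

set_option maxHeartbeats 2000000 in
theorem simplex_code_average_radius_and_list_recoverability
    (q ℓ L m : ℕ) (hq : 3 ≤ q) (hl1 : 1 ≤ ℓ) (hlq : ℓ < q) (hL : 2 ≤ L) (hm : 1 ≤ m)
    (n : ℕ) (hn : n = Nat.multinomial (Finset.univ : Finset (Fin q)) (fun _ => m))
    -- the columns of the codebook are exactly all balanced vectors in `[q]^(qm)`
    (e : Fin n ≃ {v : Fin (q * m) → Fin q //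
        ∀ s : Fin q, (Finset.univ.filter fun i => v i = s).card = m})
    -- `cw r` is the codeword given by row `r` of the codebook
    (cw : Fin (q * m) → Fin n → Fin q) (hcw : ∀ r j, cw r j = (e j).1 r)
    (C : Finset (Fin n → Fin q)) (hC : C = Finset.univ.image cw)
    (R : ℝ)
    (hR : R = 1 - ∑ a ∈ Finset.Nat.antidiagonalTuple q L,
        ((maxl q ℓ a : ℝ) / (L : ℝ)) * (Nat.multinomial Finset.univ a : ℝ) *
          (if ∀ i, a i ≤ m then
              (Nat.multinomial Finset.univ (fun i => m - a i) : ℝ) else 0) /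
          (Nat.multinomial (Finset.univ : Finset (Fin q)) (fun _ : Fin q => m) : ℝ)) :
    -- (i) every `L`-tuple of pairwise distinct codewords has average `ℓ`-radius `R`
    (∀ rs : Fin L → Fin (q * m), Function.Injective (fun i => cw (rs i)) →
      (1 / (n : ℝ)) * ∑ j, (1 - (plurL ℓ (fun i => cw (rs i) j) : ℝ) / (L : ℝ)) = R) ∧
    -- (ii) consequently `C` is `(p,ℓ,L)`-list-recoverable for every `p < R`
    (∀ p : ℝ, p < R → ∀ Y : Fin n → {A : Finset (Fin q) // A.card = ℓ},
      (C.filter fun c => (dLR c Y : ℝ) ≤ p * n).card ≤ L - 1) := by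
  have hnpos : 0 < n := by rw [hn]; exact Nat.multinomial_pos _ _
  have hne : (n : ℝ) ≠ 0 := Nat.cast_ne_zero.2 hnpos.ne'
  have hL0 : (0 : ℝ) < (L : ℝ) := by exact_mod_cast (by omega : 0 < L)
  have main : ∀ rs : Fin L → Fin (q * m), Function.Injective (fun i => cw (rs i)) →
      (1 / (n : ℝ)) * ∑ j, (1 - (plurL ℓ (fun i => cw (rs i) j) : ℝ) / (L : ℝ)) = R := by
    intro rs hinj
    have hrs : Function.Injective rs := fun i j h => hinj (congrArg cw h)
    have hTcard : (Finset.univ.image rs).card = L := by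
      rw [Finset.card_image_of_injective _ hrs, Finset.card_univ, Fintype.card_fin]
    have htypT : ∀ (v : Fin (q * m) → Fin q) (s : Fin q),
        ((Finset.univ.image rs).filter fun x => v x = s).card
          = (Finset.univ.filter fun i : Fin L => v (rs i) = s).card := by
      intro v s
      rw [Finset.filter_image, Finset.card_image_of_injective _ hrs]
    have hsum_typ : ∀ v : Fin (q * m) → Fin q,
        (∑ s : Fin q, (Finset.univ.filter fun i : Fin L => v (rs i) = s).card) = L := by
      intro v
      have h := Finset.card_eq_sum_card_fiberwise
        (s := (Finset.univ : Finset (Fin L))) (t := (Finset.univ : Finset (Fin q)))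
        (f := fun i => v (rs i)) (fun i _ => Finset.mem_univ _)
      rw [Finset.card_univ, Fintype.card_fin] at h
      exact h.symm
    have hcount : ∀ a ∈ Finset.Nat.antidiagonalTuple q L,
        (((Finset.univ.filter fun v : Fin (q * m) → Fin q =>
              ∀ s : Fin q, (Finset.univ.filter fun i => v i = s).card = m).filter
            fun v => (fun s => (Finset.univ.filter fun i : Fin L => v (rs i) = s).card) = a).card)
          = Nat.multinomial Finset.univ a *
            (if ∀ i, a i ≤ m then Nat.multinomial Finset.univ (fun i => m - a i) else 0) := by
      intro a ha
      rw [Finset.Nat.mem_antidiagonalTuple] at ha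
      by_cases ham : ∀ i, a i ≤ m
      · rw [if_pos ham]
        have hset : ((Finset.univ.filter fun v : Fin (q * m) → Fin q =>
              ∀ s : Fin q, (Finset.univ.filter fun i => v i = s).card = m).filter
            fun v => (fun s => (Finset.univ.filter fun i : Fin L => v (rs i) = s).card) = a)
            = (Finset.univ : Finset (Fin (q * m) → Fin q)).filter (fun v =>
              (∀ s : Fin q, ((Finset.univ : Finset {x // x ∈ Finset.univ.image rs}).filter
                  (fun x => v x.1 = s)).card = a s) ∧
              (∀ s : Fin q, ((Finset.univ :
                    Finset {x // x ∈ ((Finset.univ.image rs)ᶜ : Finset (Fin (q * m)))}).filter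
                  (fun x => v x.1 = s)).card = m - a s)) := by
          ext v
          rw [Finset.mem_filter, Finset.mem_filter, Finset.mem_filter]
          simp only [Finset.mem_univ, true_and]
          constructor
          · rintro ⟨hbal, htypa⟩
            have hA : ∀ s, ((Finset.univ.image rs).filter fun x => v x = s).card = a s := by
              intro s; rw [htypT]; exact congrFun htypa s
            constructor
            · intro s
              rw [aux_card_filter_coe (Finset.univ.image rs) (fun x => v x = s)]
              exact hA s
            · intro s
              rw [aux_card_filter_coe ((Finset.univ.image rs)ᶜ) (fun x => v x = s)]
              have hsplit := aux_card_split (Finset.univ.image rs) (fun x => v x = s)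
              have hb := hbal s
              have hAs := hA s
              omega
          · rintro ⟨h1, h2⟩
            have hA : ∀ s, ((Finset.univ.image rs).filter fun x => v x = s).card = a s := by
              intro s
              have := h1 s
              rwa [aux_card_filter_coe (Finset.univ.image rs) (fun x => v x = s)] at this
            have hB : ∀ s, (((Finset.univ.image rs)ᶜ : Finset (Fin (q * m))).filter
                fun x => v x = s).card = m - a s := by
              intro s
              have := h2 s
              rwa [aux_card_filter_coe ((Finset.univ.image rs)ᶜ) (fun x => v x = s)] at this
            constructor
            · intro s
              have hsplit := aux_card_split (Finset.univ.image rs) (fun x => v x = s)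
              have h3 := hA s; have h4 := hB s; have h5 := ham s
              omega
            · funext s
              rw [← htypT]; exact hA s
        rw [hset,
          aux_card_prod q (Fin (q * m)) (Finset.univ.image rs)
            (fun f => ∀ s : Fin q, (Finset.univ.filter fun x => f x = s).card = a s)
            (fun g => ∀ s : Fin q, (Finset.univ.filter fun x => g x = s).card = m - a s),
          aux_countA_univ q _ a (by rw [Fintype.card_coe, hTcard]; exact ha),
          aux_countA_univ q _ (fun i => m - a i) ?_]
        · have h1 : (∑ i : Fin q, ((m - a i) + a i)) = ∑ i : Fin q, m :=
            Finset.sum_congr rfl fun i _ => by have := ham i; omega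
          rw [Finset.sum_add_distrib, ha] at h1
          rw [Finset.sum_const, Finset.card_univ, Fintype.card_fin, smul_eq_mul] at h1
          rw [Fintype.card_coe, Finset.card_compl, Fintype.card_fin, hTcard]
          exact Nat.eq_sub_of_add_eq h1
      · rw [if_neg ham, Nat.mul_zero, Finset.card_eq_zero, Finset.filter_eq_empty_iff]
        intro v hv htypa
        apply ham
        intro i
        have hbal := (Finset.mem_filter.1 hv).2 i
        have h1 : (Finset.univ.filter fun j : Fin L => v (rs j) = i).card = a i :=
          congrFun htypa i
        have h2 := htypT v i
        have h3 := aux_card_split (Finset.univ.image rs) (fun x => v x = i)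
        omega
    have key : (∑ j, (1 - (plurL ℓ (fun i => cw (rs i) j) : ℝ) / (L : ℝ)))
        = ∑ a ∈ Finset.Nat.antidiagonalTuple q L,
            ((((Finset.univ.filter fun v : Fin (q * m) → Fin q =>
                  ∀ s : Fin q, (Finset.univ.filter fun i => v i = s).card = m).filter
                fun v => (fun s => (Finset.univ.filter fun i : Fin L => v (rs i) = s).card)
                  = a).card : ℝ))
              * (1 - (maxl q ℓ a : ℝ) / (L : ℝ)) := by
      have h1 : ∀ j : Fin n, plurL ℓ (fun i => cw (rs i) j)
          = maxl q ℓ (fun s => (Finset.univ.filter fun i : Fin L => (e j).1 (rs i) = s).card) := by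
        intro j
        have hx : (fun i => cw (rs i) j) = fun i => (e j).1 (rs i) :=
          funext fun i => hcw (rs i) j
        rw [hx]
        unfold plurL maxl
        refine Finset.sup_congr rfl fun A _ => ?_
        exact aux_card_mem_eq_sum _ A
      calc ∑ j, (1 - (plurL ℓ (fun i => cw (rs i) j) : ℝ) / (L : ℝ))
          = ∑ j, (1 - (maxl q ℓ (fun s =>
              (Finset.univ.filter fun i : Fin L => (e j).1 (rs i) = s).card) : ℝ) / (L : ℝ)) :=
            Finset.sum_congr rfl fun j _ => by rw [h1 j]
        _ = ∑ v : {v : Fin (q * m) → Fin q //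
              ∀ s : Fin q, (Finset.univ.filter fun i => v i = s).card = m},
              (1 - (maxl q ℓ (fun s =>
                (Finset.univ.filter fun i : Fin L => v.1 (rs i) = s).card) : ℝ) / (L : ℝ)) :=
            Equiv.sum_comp e (fun v => (1 - (maxl q ℓ (fun s =>
              (Finset.univ.filter fun i : Fin L => v.1 (rs i) = s).card) : ℝ) / (L : ℝ)))
        _ = ∑ v ∈ Finset.univ.filter (fun v : Fin (q * m) → Fin q =>
              ∀ s : Fin q, (Finset.univ.filter fun i => v i = s).card = m),
              (1 - (maxl q ℓ (fun s =>
                (Finset.univ.filter fun i : Fin L => v (rs i) = s).card) : ℝ) / (L : ℝ)) :=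
            (Finset.sum_subtype
              (p := fun v : Fin (q * m) → Fin q =>
                ∀ s : Fin q, (Finset.univ.filter fun i => v i = s).card = m)
              (Finset.univ.filter (fun v : Fin (q * m) → Fin q =>
                ∀ s : Fin q, (Finset.univ.filter fun i => v i = s).card = m))
              (fun x => by simp)
              (fun v => (1 - (maxl q ℓ (fun s =>
                (Finset.univ.filter fun i : Fin L => v (rs i) = s).card) : ℝ) / (L : ℝ)))).symm
        _ = ∑ a ∈ Finset.Nat.antidiagonalTuple q L,
              ∑ v ∈ (Finset.univ.filter (fun v : Fin (q * m) → Fin q =>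
                ∀ s : Fin q, (Finset.univ.filter fun i => v i = s).card = m)).filter
                  (fun v => (fun s =>
                    (Finset.univ.filter fun i : Fin L => v (rs i) = s).card) = a),
              (1 - (maxl q ℓ (fun s =>
                (Finset.univ.filter fun i : Fin L => v (rs i) = s).card) : ℝ) / (L : ℝ)) :=
            (Finset.sum_fiberwise_of_maps_to
              (fun v _ => Finset.Nat.mem_antidiagonalTuple.2 (hsum_typ v)) _).symm
        _ = _ := by
            refine Finset.sum_congr rfl fun a ha => ?_
            rw [Finset.sum_congr rfl (fun v hv => by
              rw [(Finset.mem_filter.1 hv).2]), Finset.sum_const, nsmul_eq_mul]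
    have hsumcnt : (∑ a ∈ Finset.Nat.antidiagonalTuple q L,
        (((Finset.univ.filter fun v : Fin (q * m) → Fin q =>
              ∀ s : Fin q, (Finset.univ.filter fun i => v i = s).card = m).filter
            fun v => (fun s => (Finset.univ.filter fun i : Fin L => v (rs i) = s).card)
              = a).card)) = n := by
      rw [← Finset.card_eq_sum_card_fiberwise
        (fun v _ => Finset.Nat.mem_antidiagonalTuple.2 (hsum_typ v))]
      have h2 : (Finset.univ.filter fun v : Fin (q * m) → Fin q =>
          ∀ s : Fin q, (Finset.univ.filter fun i => v i = s).card = m).card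
          = Fintype.card {v : Fin (q * m) → Fin q //
              ∀ s : Fin q, (Finset.univ.filter fun i => v i = s).card = m} :=
        (Fintype.card_subtype _).symm
      rw [h2, ← Fintype.card_congr e, Fintype.card_fin]
    rw [key]
    have hR' : R = 1 - (1 / (n : ℝ)) * ∑ a ∈ Finset.Nat.antidiagonalTuple q L,
        (maxl q ℓ a : ℝ) / (L : ℝ) *
          ((((Finset.univ.filter fun v : Fin (q * m) → Fin q =>
                ∀ s : Fin q, (Finset.univ.filter fun i => v i = s).card = m).filter
              fun v => (fun s => (Finset.univ.filter fun i : Fin L => v (rs i) = s).card)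
                = a).card : ℝ)) := by
      rw [hR, ← hn]
      congr 1
      rw [Finset.mul_sum]
      refine Finset.sum_congr rfl fun a ha => ?_
      rw [hcount a ha]
      push_cast [apply_ite (Nat.cast : ℕ → ℝ)]
      ring
    rw [hR']
    have hsplit : (∑ a ∈ Finset.Nat.antidiagonalTuple q L,
        ((((Finset.univ.filter fun v : Fin (q * m) → Fin q =>
              ∀ s : Fin q, (Finset.univ.filter fun i => v i = s).card = m).filter
            fun v => (fun s => (Finset.univ.filter fun i : Fin L => v (rs i) = s).card)
              = a).card : ℝ)) * (1 - (maxl q ℓ a : ℝ) / (L : ℝ)))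
        = (∑ a ∈ Finset.Nat.antidiagonalTuple q L,
            ((((Finset.univ.filter fun v : Fin (q * m) → Fin q =>
                ∀ s : Fin q, (Finset.univ.filter fun i => v i = s).card = m).filter
              fun v => (fun s => (Finset.univ.filter fun i : Fin L => v (rs i) = s).card)
                = a).card : ℝ)))
          - ∑ a ∈ Finset.Nat.antidiagonalTuple q L,
              (maxl q ℓ a : ℝ) / (L : ℝ) *
                ((((Finset.univ.filter fun v : Fin (q * m) → Fin q =>
                      ∀ s : Fin q, (Finset.univ.filter fun i => v i = s).card = m).filter
                    fun v => (fun s =>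
                      (Finset.univ.filter fun i : Fin L => v (rs i) = s).card) = a).card : ℝ)) := by
      rw [← Finset.sum_sub_distrib]
      exact Finset.sum_congr rfl fun a _ => by ring
    rw [hsplit, mul_sub]
    congr 1
    rw [← Nat.cast_sum, hsumcnt, one_div, inv_mul_cancel₀ hne]
  refine ⟨main, ?_⟩
  intro p hp Y
  by_contra hcon
  push_neg at hcon
  have hLle : L ≤ (C.filter fun c => (dLR c Y : ℝ) ≤ p * n).card := by omega
  obtain ⟨D, hDsub, hDcard⟩ := Finset.exists_subset_card_eq hLle
  have eD : Fin L ≃ {x // x ∈ D} := (D.equivFin.trans (finCongr hDcard)).symm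
  have hginj : Function.Injective (fun i => (eD i).1) := fun i j h =>
    eD.injective (Subtype.ext h)
  have hgmem : ∀ i, (eD i).1 ∈ C.filter fun c => (dLR c Y : ℝ) ≤ p * n :=
    fun i => hDsub (eD i).2
  have hex : ∀ i, ∃ r, cw r = (eD i).1 := by
    intro i
    have hiC : (eD i).1 ∈ C := Finset.mem_of_mem_filter _ (hgmem i)
    rw [hC] at hiC
    rcases Finset.mem_image.1 hiC with ⟨r, -, hr⟩
    exact ⟨r, hr⟩
  choose rs hrsg using hex
  have hinj : Function.Injective (fun i => cw (rs i)) := by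
    intro i j h
    apply hginj
    simpa only [hrsg i, hrsg j] using h
  have hmain := main rs hinj
  have hmain' : (1 / (n : ℝ)) *
      ∑ j, (1 - (plurL ℓ (fun i => (eD i).1 j) : ℝ) / (L : ℝ)) = R := by
    rw [← hmain]
    congr 1
    refine Finset.sum_congr rfl fun j _ => ?_
    rw [show (fun i => cw (rs i) j) = fun i => (eD i).1 j from
      funext fun i => congrFun (hrsg i) j]
  have hptw : ∀ j : Fin n, (1 : ℝ) - (plurL ℓ (fun i => (eD i).1 j) : ℝ) / (L : ℝ)
      ≤ ((Finset.univ.filter fun i : Fin L => (eD i).1 j ∉ (Y j).1).card : ℝ) / (L : ℝ) := by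
    intro j
    have h1 : (Finset.univ.filter fun i : Fin L => (eD i).1 j ∈ (Y j).1).card
        + (Finset.univ.filter fun i : Fin L => ¬ ((eD i).1 j ∈ (Y j).1)).card = L := by
      rw [Finset.card_filter_add_card_filter_not, Finset.card_univ, Fintype.card_fin]
    have h2 : (Finset.univ.filter fun i : Fin L => (eD i).1 j ∈ (Y j).1).card
        ≤ plurL ℓ (fun i => (eD i).1 j) := by
      unfold plurL
      exact Finset.le_sup
        (f := fun A => (Finset.univ.filter fun i : Fin L => (eD i).1 j ∈ A).card)
        (by rw [Finset.mem_powersetCard]; exact ⟨Finset.subset_univ _, (Y j).2⟩)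
    have h3 : (L : ℝ) ≤ (plurL ℓ (fun i => (eD i).1 j) : ℝ)
        + ((Finset.univ.filter fun i : Fin L => (eD i).1 j ∉ (Y j).1).card : ℝ) := by
      exact_mod_cast (by omega : L ≤ plurL ℓ (fun i => (eD i).1 j)
        + (Finset.univ.filter fun i : Fin L => ¬ ((eD i).1 j ∈ (Y j).1)).card)
    have h4 : ((L : ℝ) - (plurL ℓ (fun i => (eD i).1 j) : ℝ)) / (L : ℝ)
        ≤ ((Finset.univ.filter fun i : Fin L => (eD i).1 j ∉ (Y j).1).card : ℝ) / (L : ℝ) :=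
      (div_le_div_iff_of_pos_right hL0).2 (by linarith)
    rwa [sub_div, div_self hL0.ne'] at h4
  have hswap : (∑ j : Fin n,
      ((Finset.univ.filter fun i : Fin L => (eD i).1 j ∉ (Y j).1).card : ℝ))
      = ∑ i : Fin L, (dLR (fun j => (eD i).1 j) Y : ℝ) := by
    have hNat : (∑ j : Fin n, (Finset.univ.filter fun i : Fin L => (eD i).1 j ∉ (Y j).1).card)
        = ∑ i : Fin L, dLR (fun j => (eD i).1 j) Y := by
      unfold dLR
      simp only [Finset.card_filter]
      rw [Finset.sum_comm]
    exact_mod_cast congrArg (Nat.cast : ℕ → ℝ) hNat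
  have hdlr : ∀ i : Fin L, (dLR (fun j => (eD i).1 j) Y : ℝ) ≤ p * n := by
    intro i
    have := (Finset.mem_filter.1 (hgmem i)).2
    simpa using this
  have hsum2 : (∑ i : Fin L, (dLR (fun j => (eD i).1 j) Y : ℝ)) ≤ (L : ℝ) * (p * n) := by
    calc (∑ i : Fin L, (dLR (fun j => (eD i).1 j) Y : ℝ))
        ≤ ∑ _i : Fin L, p * n := Finset.sum_le_sum fun i _ => hdlr i
      _ = (L : ℝ) * (p * n) := by
          rw [Finset.sum_const, Finset.card_univ, Fintype.card_fin, nsmul_eq_mul]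
  have hfir : (∑ j, ((1 : ℝ) - (plurL ℓ (fun i => (eD i).1 j) : ℝ) / (L : ℝ))) ≤ p * n := by
    calc (∑ j, ((1 : ℝ) - (plurL ℓ (fun i => (eD i).1 j) : ℝ) / (L : ℝ)))
        ≤ ∑ j, ((Finset.univ.filter fun i : Fin L => (eD i).1 j ∉ (Y j).1).card : ℝ) / (L : ℝ) :=
          Finset.sum_le_sum fun j _ => hptw j
      _ = (∑ j : Fin n,
            ((Finset.univ.filter fun i : Fin L => (eD i).1 j ∉ (Y j).1).card : ℝ)) / (L : ℝ) := by
          rw [Finset.sum_div]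
      _ = (∑ i : Fin L, (dLR (fun j => (eD i).1 j) Y : ℝ)) / (L : ℝ) := by rw [hswap]
      _ ≤ ((L : ℝ) * (p * n)) / (L : ℝ) := (div_le_div_iff_of_pos_right hL0).2 hsum2
      _ = p * n := by field_simp
  have hRlep : R ≤ p := by
    rw [← hmain']
    calc (1 / (n : ℝ)) * ∑ j, (1 - (plurL ℓ (fun i => (eD i).1 j) : ℝ) / (L : ℝ))
        ≤ (1 / (n : ℝ)) * (p * n) := by
          apply mul_le_mul_of_nonneg_left hfir
          positivity
      _ = p := by field_simp
  linarith
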